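/- Let θ : G → ℂ be a function with |θ(g)| = 1 for all g, and let (ψ_i)_{i ∈ ι} be an orthonormal family of vectors satisfying π(g) ψ_i = θ(g) • ψ_i for every g ∈ G and every i. Let (E_p)_{p ∈ κ} be a family of n×n complex matrices, and let V be a ℂ-linear subspace of matrices such that (a) E_p* E_q ∈ V for all p, q, (b) π(g) S π(g)* ∈ V for every S ∈ V and g ∈ G, and (c) every element of V commuting with π(g) for all g ∈ G is a scalar multiple of the identity. Then for all p, q there exists a scalar c_{pq} ∈ ℂ such that ⟨ψ_i, E_p* E_q ψ_j⟩ = c_{pq} if i = j and 0 if i ≠ j, i.e., the Knill–Laflamme quantum error-correction conditions hold for the errors E_p on the span of the ψ_i. -/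

import Mathlib

/-- The symmetrization map `Π_G` associated with a unitary representation
`π : G →* U(n)`: `Π_G(S) = (1/|G|) ∑ g, π(g) S π(g)*`. -/
noncomputable def symG {G : Type*} [Group G] [Fintype G] {n : ℕ}
    (π : G →* Matrix.unitaryGroup (Fin n) ℂ)
    (S : Matrix (Fin n) (Fin n) ℂ) : Matrix (Fin n) (Fin n) ℂ :=
  (Fintype.card G : ℂ)⁻¹ • ∑ g : G,
    (π g : Matrix (Fin n) (Fin n) ℂ) * S * star (π g : Matrix (Fin n) (Fin n) ℂ)

lemma symG_aux_star_coe {G : Type*} [Group G] {n : ℕ}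
    (π : G →* Matrix.unitaryGroup (Fin n) ℂ) (g : G) :
    star (π g : Matrix (Fin n) (Fin n) ℂ) = (π g⁻¹ : Matrix (Fin n) (Fin n) ℂ) := by
  rw [map_inv]; rfl

/-- Knill–Laflamme conditions from an inaccessible symmetry: suppose the orthonormal
family `(ψ i)` transforms under `G` with a common unimodular phase function, the
products `E_p* E_q` lie in a subspace `V` closed under conjugation by the
representation, and every element of `V` commuting with all `π(g)` is a scalar
multiple of the identity.  Then for all `p, q` there is a scalar `c_{pq}` with
`⟨ψ i, E_p* E_q ψ j⟩ = c_{pq} δ_{ij}`. -/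
theorem knill_laflamme_of_inaccessible {G : Type*} [Group G] [Fintype G] {n : ℕ}
    (hn : 0 < n) (π : G →* Matrix.unitaryGroup (Fin n) ℂ)
    {ι κ : Type*} [DecidableEq ι] (θ : G → ℂ) (hθ : ∀ g, ‖θ g‖ = 1)
    (ψ : ι → EuclideanSpace ℂ (Fin n)) (hortho : Orthonormal ℂ ψ)
    (heig : ∀ (g : G) (i : ι),
      Matrix.toEuclideanLin (π g : Matrix (Fin n) (Fin n) ℂ) (ψ i) = θ g • ψ i)
    (E : κ → Matrix (Fin n) (Fin n) ℂ)
    (V : Submodule ℂ (Matrix (Fin n) (Fin n) ℂ))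
    (hEV : ∀ p q : κ, star (E p) * E q ∈ V)
    (hclosed : ∀ S ∈ V, ∀ g : G,
      (π g : Matrix (Fin n) (Fin n) ℂ) * S * star (π g : Matrix (Fin n) (Fin n) ℂ) ∈ V)
    (hinacc : ∀ S ∈ V,
      (∀ g : G, (π g : Matrix (Fin n) (Fin n) ℂ) * S
          = S * (π g : Matrix (Fin n) (Fin n) ℂ)) →
      ∃ c : ℂ, S = c • (1 : Matrix (Fin n) (Fin n) ℂ)) :
    ∀ p q : κ, ∃ c : ℂ, ∀ i j : ι,
      (inner ℂ (ψ i) (Matrix.toEuclideanLin (star (E p) * E q) (ψ j)) : ℂ)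
        = if i = j then c else 0 := by
  intro p q
  set S := star (E p) * E q with hS
  set T := symG π S with hT
  have hcardG : (Fintype.card G : ℂ) ≠ 0 := Nat.cast_ne_zero.mpr Fintype.card_ne_zero
  have hTV : T ∈ V := by
    rw [hT, symG]
    exact Submodule.smul_mem _ _ (Submodule.sum_mem _ fun g _ => hclosed S (hEV p q) g)
  have hconj : ∀ g₀ : G,
      (π g₀ : Matrix (Fin n) (Fin n) ℂ) * T * star (π g₀ : Matrix (Fin n) (Fin n) ℂ) = T := by
    intro g₀
    rw [hT, symG, Matrix.mul_smul, Matrix.smul_mul, Finset.mul_sum, Finset.sum_mul]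
    congr 1
    refine Fintype.sum_equiv (Equiv.mulLeft g₀) _ _ fun g => ?_
    have h1 : (π (g₀ * g) : Matrix (Fin n) (Fin n) ℂ)
        = (π g₀ : Matrix (Fin n) (Fin n) ℂ) * (π g : Matrix (Fin n) (Fin n) ℂ) := by
      rw [map_mul]; rfl
    simp only [Equiv.coe_mulLeft, h1, star_mul, mul_assoc]
  have hcomm : ∀ g₀ : G,
      (π g₀ : Matrix (Fin n) (Fin n) ℂ) * T = T * (π g₀ : Matrix (Fin n) (Fin n) ℂ) := by
    intro g₀
    have h := congrArg (· * (π g₀ : Matrix (Fin n) (Fin n) ℂ)) (hconj g₀)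
    simpa [mul_assoc, (π g₀).2.1] using h
  obtain ⟨c, hc⟩ := hinacc T hTV hcomm
  refine ⟨c, fun i j => ?_⟩
  have hterm : ∀ g : G,
      (inner ℂ (ψ i) (Matrix.toEuclideanLin
        ((π g : Matrix (Fin n) (Fin n) ℂ) * S * star (π g : Matrix (Fin n) (Fin n) ℂ)) (ψ j)) : ℂ)
      = inner ℂ (ψ i) (Matrix.toEuclideanLin S (ψ j)) := by
    intro g
    have hmul : Matrix.toEuclideanLin
        ((π g : Matrix (Fin n) (Fin n) ℂ) * S * star (π g : Matrix (Fin n) (Fin n) ℂ)) (ψ j)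
        = Matrix.toEuclideanLin (π g : Matrix (Fin n) (Fin n) ℂ)
            (Matrix.toEuclideanLin S
              (Matrix.toEuclideanLin (star (π g : Matrix (Fin n) (Fin n) ℂ)) (ψ j))) := by
      simp [Matrix.toEuclideanLin_apply, Matrix.mulVec_mulVec, mul_assoc]
    have hstarψ : ∀ k, Matrix.toEuclideanLin (star (π g : Matrix (Fin n) (Fin n) ℂ)) (ψ k)
        = θ g⁻¹ • ψ k := fun k => by rw [symG_aux_star_coe]; exact heig g⁻¹ k
    have hadj : ∀ y : EuclideanSpace ℂ (Fin n),
        (inner ℂ (ψ i) (Matrix.toEuclideanLin (π g : Matrix (Fin n) (Fin n) ℂ) y) : ℂ)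
        = inner ℂ (Matrix.toEuclideanLin (star (π g : Matrix (Fin n) (Fin n) ℂ)) (ψ i)) y := by
      intro y
      rw [show star (π g : Matrix (Fin n) (Fin n) ℂ)
            = ((π g : Matrix (Fin n) (Fin n) ℂ)).conjTranspose from rfl,
        Matrix.toEuclideanLin_conjTranspose_eq_adjoint, LinearMap.adjoint_inner_left]
    have hunit : (starRingEnd ℂ) (θ g⁻¹) * θ g⁻¹ = 1 := by
      rw [mul_comm, Complex.mul_conj, Complex.normSq_eq_norm_sq, hθ g⁻¹]
      norm_num
    rw [hmul, hadj, hstarψ i, hstarψ j, map_smul, inner_smul_left, inner_smul_right,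
      ← mul_assoc, hunit, one_mul]
  have hkey : (inner ℂ (ψ i) (Matrix.toEuclideanLin S (ψ j)) : ℂ)
      = inner ℂ (ψ i) (Matrix.toEuclideanLin T (ψ j)) := by
    rw [hT, symG, map_smul, map_sum]
    simp only [LinearMap.smul_apply, LinearMap.sum_apply, inner_smul_right, inner_sum]
    rw [Finset.sum_congr rfl fun g _ => hterm g]
    simp [Finset.sum_const, mul_comm, ← mul_assoc, inv_mul_cancel₀ hcardG]
  rw [hkey, hc]
  have h1 : Matrix.toEuclideanLin (c • (1 : Matrix (Fin n) (Fin n) ℂ)) (ψ j) = c • ψ j := by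
    simp [Matrix.toEuclideanLin_apply, Matrix.smul_mulVec]
  rw [h1, inner_smul_right, orthonormal_iff_ite.mp hortho i j]
  simp
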